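/- arXiv:math-ph/0312033 — 7 statements merged into one kernel-verified Lean document; each statement's English description precedes it below -/
import Mathlib

section
/- The number of Boolean functions on n variables (n ≥ 1) that are both positively and negatively canalizing is exactly 2n. Specifically, such a function is determined by a choice of a variable i ∈ [n] and a choice between f(x) = x_i and f(x) = 1 - x_i. -/
theorem card_both_canalizing (n : ℕ) (hn : 1 ≤ n) :
    Nat.card {f : (Fin n → Bool) → Bool //
      (∃ (i : Fin n) (s : Bool), ∀ x, x i = s → f x = true) ∧
      (∃ (j : Fin n) (s' : Bool), ∀ x, x j = s' → f x = false)} = 2 * n ∧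
    ∀ f : (Fin n → Bool) → Bool,
      ((∃ (i : Fin n) (s : Bool), ∀ x, x i = s → f x = true) ∧
       (∃ (j : Fin n) (s' : Bool), ∀ x, x j = s' → f x = false)) ↔
      (∃ i : Fin n, (∀ x, f x = x i) ∨ (∀ x, f x = !(x i))) := by
  have key : ∀ f : (Fin n → Bool) → Bool,
      ((∃ (i : Fin n) (s : Bool), ∀ x, x i = s → f x = true) ∧
       (∃ (j : Fin n) (s' : Bool), ∀ x, x j = s' → f x = false)) ↔
      (∃ i : Fin n, (∀ x, f x = x i) ∨ (∀ x, f x = !(x i))) := by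
    intro f
    constructor
    · rintro ⟨⟨i, s, h1⟩, ⟨j, s', h2⟩⟩
      have hij : i = j := by
        by_contra hij
        set x : Fin n → Bool := Function.update (fun _ => s') i s with hx
        have hxi : x i = s := by simp [hx]
        have hxj : x j = s' := by simp [hx, Ne.symm hij]
        have := h1 x hxi
        have := h2 x hxj
        simp_all
      subst hij
      have hss : s' = !s := by
        by_contra h
        have hs : s' = s := by cases s <;> cases s' <;> simp_all
        have := h1 (fun _ => s) rfl
        have := h2 (fun _ => s) (by simp [hs])
        simp_all
      refine ⟨i, ?_⟩
      cases s with
      | true =>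
        left
        intro x
        cases hx : x i with
        | true => exact h1 x hx
        | false => exact h2 x (by simp [hx, hss])
      | false =>
        right
        intro x
        cases hx : x i with
        | false => simpa [hx] using h1 x hx
        | true => simpa [hx] using h2 x (by simp [hx, hss])
    · rintro ⟨i, h | h⟩
      · exact ⟨⟨i, true, fun x hx => by rw [h, hx]⟩,
          ⟨i, false, fun x hx => by rw [h, hx]⟩⟩
      · exact ⟨⟨i, false, fun x hx => by simp [h x, hx]⟩,
          ⟨i, true, fun x hx => by simp [h x, hx]⟩⟩
  refine ⟨?_, key⟩
  have e : (Fin n × Bool) ≃ {f : (Fin n → Bool) → Bool //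
      (∃ (i : Fin n) (s : Bool), ∀ x, x i = s → f x = true) ∧
      (∃ (j : Fin n) (s' : Bool), ∀ x, x j = s' → f x = false)} := by
    refine Equiv.ofBijective
      (fun p => ⟨fun x => xor p.2 (x p.1),
        ⟨⟨p.1, !p.2, fun x hx => by simp [hx]⟩,
         ⟨p.1, p.2, fun x hx => by simp [hx]⟩⟩⟩) ⟨?_, ?_⟩
    · rintro ⟨i, b⟩ ⟨j, b'⟩ h
      simp only [Subtype.mk.injEq] at h
      have hb : b = b' := by
        have := congrFun h (fun _ => false)
        cases b <;> cases b' <;> simp_all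
      subst hb
      have hij : i = j := by
        by_contra hij
        have := congrFun h (Function.update (fun _ => false) i true)
        rw [Function.update_apply, Function.update_apply] at this
        simp [Ne.symm hij] at this
      simp [hij]
    · rintro ⟨f, hf⟩
      obtain ⟨i, h | h⟩ := (key f).mp hf
      · exact ⟨(i, false), Subtype.ext (funext fun x => by simp [h x])⟩
      · exact ⟨(i, true), Subtype.ext (funext fun x => by simp [h x])⟩
  rw [← Nat.card_congr e, Nat.card_prod]
  simp [Nat.card_eq_fintype_card, Nat.mul_comm]
end

section
/- Let I ⊆ [n] be nonempty. A nonconstant Boolean function f (with f ≠ 1 identically) is positively canalizing on I if and only if it is positively canalizing on {i} for every i ∈ I. That is, PC⁻_I = ⋂_{i ∈ I} PC⁻_{i}. -/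
theorem pos_canalizing_on_set_iff_singletons (n : ℕ) (f : (Fin n → Bool) → Bool)
    (hf : f ≠ fun _ => true) (I : Finset (Fin n)) (hI : I.Nonempty) :
    (∃ σ : Fin n → Bool, ∀ x : Fin n → Bool, (∃ i ∈ I, x i ≠ σ i) → f x = true) ↔
    (∀ i ∈ I, ∃ s : Bool, ∀ x : Fin n → Bool, x i ≠ s → f x = true) := by
  constructor
  · rintro ⟨σ, hσ⟩ i hi
    exact ⟨σ i, fun x hx => hσ x ⟨i, hi, hx⟩⟩
  · intro h
    classical
    refine ⟨fun i => if hi : i ∈ I then (h i hi).choose else false, fun x => ?_⟩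
    rintro ⟨i, hi, hx⟩
    simp only [dif_pos hi] at hx
    exact (h i hi).choose_spec x hx
end

section
/- For 1 ≤ k ≤ n, the number of nonconstant Boolean functions of n variables that are positively canalizing on the set [k] = {0,...,k-1} equals 2^k · (2^{2^{n-k}} − 1). -/
theorem card_pos_canalizing_on_first_k (n k : ℕ) (hk1 : 1 ≤ k) (hkn : k ≤ n) :
    Nat.card {f : (Fin n → Bool) → Bool //
      f ≠ (fun _ => true) ∧
      ∃ σ : Fin k → Bool, ∀ x : Fin n → Bool,
        (∃ i : Fin k, x (Fin.castLE hkn i) ≠ σ i) → f x = true} =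
    2 ^ k * (2 ^ 2 ^ (n - k) - 1) := by
  classical
  let emb2 : Fin (n - k) → Fin n := fun j => ⟨k + j, by omega⟩
  let join : (Fin k → Bool) → (Fin (n - k) → Bool) → Fin n → Bool :=
    fun a b i => if h : (i : ℕ) < k then a ⟨i, h⟩ else b ⟨i - k, by omega⟩
  have join1 : ∀ a b (i : Fin k), join a b (Fin.castLE hkn i) = a i := by
    intro a b i
    simp [join, i.isLt]
  have join2 : ∀ a b (j : Fin (n - k)), join a b (emb2 j) = b j := by
    intro a b j
    have h : ¬ ((emb2 j : ℕ) < k) := by simp [emb2]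
    simp only [join]
    rw [dif_neg h]
    apply congrArg
    apply Fin.ext
    simp [emb2]
  have joinx : ∀ (σ : Fin k → Bool) (x : Fin n → Bool),
      (∀ i : Fin k, x (Fin.castLE hkn i) = σ i) →
      join σ (fun j => x (emb2 j)) = x := by
    intro σ x hx
    funext i
    by_cases h : (i : ℕ) < k
    · have h2 := hx ⟨i, h⟩
      simp only [join]
      rw [dif_pos h]
      rw [← h2]
      congr 1
    · simp only [join]
      rw [dif_neg h]
      show x (emb2 _) = x i
      apply congrArg
      apply Fin.ext
      simp [emb2]
      omega
  let F : (Fin k → Bool) → ((Fin (n - k) → Bool) → Bool) → (Fin n → Bool) → Bool :=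
    fun σ g x => if ∀ i : Fin k, x (Fin.castLE hkn i) = σ i
      then g (fun j => x (emb2 j)) else true
  let Φ : (Fin k → Bool) × {g : (Fin (n - k) → Bool) → Bool // g ≠ fun _ => true} →
      {f : (Fin n → Bool) → Bool //
        f ≠ (fun _ => true) ∧
        ∃ σ : Fin k → Bool, ∀ x : Fin n → Bool,
          (∃ i : Fin k, x (Fin.castLE hkn i) ≠ σ i) → f x = true} := by
    refine fun p => ⟨F p.1 p.2.1, ?_, p.1, ?_⟩
    · -- not constant true
      obtain ⟨g, hg⟩ := p.2
      intro hcon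
      have : ∃ b, g b ≠ true := by
        by_contra h
        push_neg at h
        exact hg (funext fun b => h b)
      obtain ⟨b, hb⟩ := this
      have h1 : F p.1 g (join p.1 b) = true := by rw [hcon]
      have h2 : F p.1 g (join p.1 b) = g b := by
        have hcond : ∀ i : Fin k, join p.1 b (Fin.castLE hkn i) = p.1 i :=
          fun i => join1 _ _ i
        simp only [F, if_pos hcond]
        congr 1
        funext j
        exact join2 _ _ j
      rw [h2] at h1
      exact hb h1
    · intro x hx
      have hcond : ¬ ∀ i : Fin k, x (Fin.castLE hkn i) = p.1 i := by
        obtain ⟨i, hi⟩ := hx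
        exact fun h => hi (h i)
      simp only [F, if_neg hcond]
  have hinj : Function.Injective Φ := by
    rintro ⟨σ, g, hg⟩ ⟨σ', g', hg'⟩ heq
    have hF : F σ g = F σ' g' := congrArg Subtype.val heq
    have hb : ∃ b, g b ≠ true := by
      by_contra h
      push_neg at h
      exact hg (funext fun b => h b)
    obtain ⟨b, hbf⟩ := hb
    have hσ : σ = σ' := by
      by_contra hne
      have : ∃ i, σ i ≠ σ' i := by
        by_contra h
        push_neg at h
        exact hne (funext h)
      obtain ⟨i, hi⟩ := this
      have h1 : F σ g (join σ b) = g b := by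
        have hcond : ∀ i : Fin k, join σ b (Fin.castLE hkn i) = σ i :=
          fun i => join1 _ _ i
        simp only [F, if_pos hcond]
        congr 1
        funext j
        exact join2 _ _ j
      have h2 : F σ' g' (join σ b) = true := by
        have hcond : ¬ ∀ i : Fin k, join σ b (Fin.castLE hkn i) = σ' i := by
          intro h
        -- join σ b (castLE i) = σ i ≠ σ' i
          exact hi ((join1 σ b i) ▸ (h i))
        simp only [F, if_neg hcond]
      rw [hF, h2] at h1
      exact hbf h1.symm
    subst hσ
    have hgg : g = g' := by
      funext b
      have h1 : F σ g (join σ b) = g b := by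
        have hcond : ∀ i : Fin k, join σ b (Fin.castLE hkn i) = σ i :=
          fun i => join1 _ _ i
        simp only [F, if_pos hcond]
        congr 1
        funext j
        exact join2 _ _ j
      have h2 : F σ g' (join σ b) = g' b := by
        have hcond : ∀ i : Fin k, join σ b (Fin.castLE hkn i) = σ i :=
          fun i => join1 _ _ i
        simp only [F, if_pos hcond]
        congr 1
        funext j
        exact join2 _ _ j
      rw [← h1, hF, h2]
    simp [hgg]
  have hsurj : Function.Surjective Φ := by
    rintro ⟨f, hne, σ, hσ⟩
    have key : ∀ x : Fin n → Bool, (∀ i : Fin k, x (Fin.castLE hkn i) = σ i) →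
        f (join σ (fun j => x (emb2 j))) = f x := by
      intro x hx
      rw [joinx σ x hx]
    let g : (Fin (n - k) → Bool) → Bool := fun b => f (join σ b)
    have hgne : g ≠ fun _ => true := by
      intro hcon
      apply hne
      funext x
      by_cases hx : ∀ i : Fin k, x (Fin.castLE hkn i) = σ i
      · have := key x hx
        have hg : g (fun j => x (emb2 j)) = true := by rw [hcon]
        simp only [g] at hg
        rw [this] at hg
        exact hg
      · push_neg at hx
        exact hσ x hx
    refine ⟨⟨σ, g, hgne⟩, ?_⟩
    apply Subtype.ext
    show F σ g = f
    funext x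
    by_cases hx : ∀ i : Fin k, x (Fin.castLE hkn i) = σ i
    · simp only [F, if_pos hx, g]
      exact key x hx
    · simp only [F, if_neg hx]
      push_neg at hx
      exact (hσ x hx).symm
  have hcard := Nat.card_eq_of_bijective Φ ⟨hinj, hsurj⟩
  rw [← hcard, Nat.card_prod, Nat.card_eq_fintype_card, Nat.card_eq_fintype_card]
  congr 1
  · simp [Fintype.card_fun]
  · have : Fintype.card {g : (Fin (n - k) → Bool) → Bool // g ≠ fun _ => true}
        = Fintype.card ((Fin (n - k) → Bool) → Bool)
          - Fintype.card {g : (Fin (n - k) → Bool) → Bool // g = fun _ => true} :=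
      Fintype.card_subtype_compl _
    rw [this, Fintype.card_subtype_eq]
    simp [Fintype.card_fun]
end

section
/- For 1 ≤ k ≤ n and bias 0 ≤ p ≤ 1, the probability under the Bernoulli(p) product measure on truth tables that a random Boolean function is nonconstant and positively canalizing on [k] equals 2^k · (p^{2^n − 2^{n−k}} − p^{2^n}). -/
open scoped Classical

noncomputable def prBias {n : ℕ} (p : ℝ) (f : (Fin n → Bool) → Bool) : ℝ :=
  p ^ (Finset.univ.filter (fun x : Fin n → Bool => f x = true)).card *
  (1 - p) ^ (Finset.univ.filter (fun x : Fin n → Bool => f x = false)).card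

lemma prBias_eq_prod {n : ℕ} (p : ℝ) (f : (Fin n → Bool) → Bool) :
    prBias p f = ∏ x : Fin n → Bool, (if f x = true then p else 1 - p) := by
  rw [prBias, Finset.prod_ite, Finset.prod_const, Finset.prod_const]
  congr 2
  simp [Bool.not_eq_true]

lemma card_cube (n k : ℕ) (hkn : k ≤ n) (σ : Fin k → Bool) :
    (Finset.univ.filter
      (fun x : Fin n → Bool => ∀ i : Fin k, x (Fin.castLE hkn i) = σ i)).card
      = 2 ^ (n - k) := by
  classical
  have h : k + (n - k) = n := Nat.add_sub_cancel' hkn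
  let e1 : Fin k ⊕ Fin (n - k) ≃ Fin n := finSumFinEquiv.trans (finCongr h)
  let E : (Fin n → Bool) ≃ (Fin k → Bool) × (Fin (n - k) → Bool) :=
    (Equiv.arrowCongr e1 (Equiv.refl Bool)).symm.trans
      (Equiv.sumArrowEquivProdArrow _ _ _)
  have hE : ∀ x : Fin n → Bool, (∀ i : Fin k, x (Fin.castLE hkn i) = σ i) ↔ (E x).1 = σ := by
    intro x
    have h2 : ∀ i : Fin k, (E x).1 i = x (Fin.castLE hkn i) := by
      intro i
      have : e1 (Sum.inl i) = Fin.castLE hkn i := by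
        apply Fin.ext
        simp [e1, finSumFinEquiv]
      simp [E, Equiv.sumArrowEquivProdArrow, Equiv.arrowCongr, this]
    rw [funext_iff]
    constructor
    · intro hx i; rw [h2 i, hx i]
    · intro hx i; rw [← h2 i, hx i]
  rw [← Fintype.card_subtype]
  have e2 : {x : Fin n → Bool // ∀ i : Fin k, x (Fin.castLE hkn i) = σ i} ≃
      (Fin (n - k) → Bool) := by
    refine (E.subtypeEquiv (q := fun y => y.1 = σ) (fun x => hE x)).trans ?_
    exact {
      toFun := fun y => y.1.2
      invFun := fun b => ⟨(σ, b), rfl⟩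
      left_inv := by rintro ⟨⟨a, b⟩, rfl⟩; rfl
      right_inv := fun b => rfl }
  rw [Fintype.card_congr e2]
  simp

lemma sum_R (n k : ℕ) (hkn : k ≤ n) (p : ℝ) (σ : Fin k → Bool) :
    (∑ f : (Fin n → Bool) → Bool,
      if ∀ x : Fin n → Bool, (∃ i : Fin k, x (Fin.castLE hkn i) ≠ σ i) → f x = true
      then prBias p f else 0) = p ^ (2 ^ n - 2 ^ (n - k)) := by
  classical
  set pr : (Fin n → Bool) → Prop := fun x => ∃ i : Fin k, x (Fin.castLE hkn i) ≠ σ i with hpr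
  set W : (Fin n → Bool) → Bool → ℝ :=
    fun x b => if b = true then p else (if pr x then 0 else 1 - p) with hW
  have key : ∀ f : (Fin n → Bool) → Bool,
      (if ∀ x : Fin n → Bool, pr x → f x = true then prBias p f else 0)
        = ∏ x : Fin n → Bool, W x (f x) := by
    intro f
    rw [prBias_eq_prod]
    rw [← Finset.prod_filter_mul_prod_filter_not Finset.univ pr (fun x => W x (f x))]
    have h1 : ∀ x ∈ Finset.univ.filter pr, W x (f x) =
        (if f x = true then (1:ℝ) else 0) * (if f x = true then p else 1 - p) := by
      intro x hx
      rw [Finset.mem_filter] at hx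
      by_cases hf : f x = true <;> simp [hW, hx.2, hf]
    have h2 : ∀ x ∈ Finset.univ.filter (fun x => ¬ pr x), W x (f x) =
        (if f x = true then p else 1 - p) := by
      intro x hx
      rw [Finset.mem_filter] at hx
      by_cases hf : f x = true <;> simp [hW, hx.2, hf]
    rw [Finset.prod_congr rfl h1, Finset.prod_congr rfl h2, Finset.prod_mul_distrib,
      Finset.prod_boole]
    rw [mul_assoc, Finset.prod_filter_mul_prod_filter_not]
    have : (∀ x ∈ Finset.univ.filter pr, f x = true) ↔ (∀ x, pr x → f x = true) := by
      simp
    by_cases hc : ∀ x, pr x → f x = true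
    · rw [if_pos hc, if_pos (this.mpr hc), one_mul]
    · rw [if_neg hc, if_neg (fun h => hc (this.mp h)), zero_mul]
  rw [Finset.sum_congr rfl (fun f _ => key f)]
  have swap : (∑ f : (Fin n → Bool) → Bool, ∏ x : Fin n → Bool, W x (f x))
      = ∏ x : Fin n → Bool, (∑ b : Bool, W x b) := by
    rw [Finset.prod_univ_sum]
    rw [Fintype.piFinset_univ]
  rw [swap]
  have hb : ∀ x : Fin n → Bool, (∑ b : Bool, W x b) = if pr x then p else 1 := by
    intro x
    rw [Fintype.sum_bool]
    by_cases hx : pr x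
    · simp [hW, hx]
    · simp only [hW, hx, if_true, if_false]
      ring_nf
      simp
  rw [Finset.prod_congr rfl (fun x _ => hb x)]
  rw [Finset.prod_ite, Finset.prod_const, Finset.prod_const, one_pow, mul_one]
  congr 1
  have hcard := Finset.card_filter_add_card_filter_not
    (s := (Finset.univ : Finset (Fin n → Bool))) (p := fun x => ¬ pr x)
  have hnot : (Finset.univ.filter (fun x : Fin n → Bool => ¬ pr x)).card = 2 ^ (n - k) := by
    rw [← card_cube n k hkn σ]
    congr 1
    apply Finset.filter_congr
    intro x _
    simp only [hpr]
    push_neg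
    rfl
  have huniv : (Finset.univ : Finset (Fin n → Bool)).card = 2 ^ n := by
    simp [Finset.card_univ]
  -- hcard : filter (¬pr) + filter (¬¬pr) = 2^n ; we want filter pr
  have hnn : Finset.univ.filter (fun x : Fin n → Bool => ¬ ¬ pr x) = Finset.univ.filter pr := by
    apply Finset.filter_congr; intro x _; simp
  rw [hnn, hnot, huniv] at hcard
  have hle : (2:ℕ) ^ (n - k) ≤ 2 ^ n := Nat.pow_le_pow_right (by norm_num) (Nat.sub_le n k)
  exact Nat.eq_sub_of_add_eq' hcard

lemma unique_sigma (n k : ℕ) (hkn : k ≤ n) (f : (Fin n → Bool) → Bool)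
    (hf : f ≠ fun _ => true) (σ τ : Fin k → Bool)
    (hσ : ∀ x : Fin n → Bool, (∃ i : Fin k, x (Fin.castLE hkn i) ≠ σ i) → f x = true)
    (hτ : ∀ x : Fin n → Bool, (∃ i : Fin k, x (Fin.castLE hkn i) ≠ τ i) → f x = true) :
    σ = τ := by
  by_contra h
  obtain ⟨i, hi⟩ := Function.ne_iff.mp h
  apply hf
  funext x
  by_cases hx : ∃ j : Fin k, x (Fin.castLE hkn j) ≠ σ j
  · exact hσ x hx
  · push_neg at hx
    exact hτ x ⟨i, by rw [hx i]; exact hi⟩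

lemma prBias_const_true (n : ℕ) (p : ℝ) :
    prBias p (fun _ : Fin n → Bool => true) = p ^ 2 ^ n := by
  rw [prBias]
  simp

theorem prob_pos_canalizing_on_first_k (n k : ℕ) (hk1 : 1 ≤ k) (hkn : k ≤ n)
    (p : ℝ) (hp0 : 0 ≤ p) (hp1 : p ≤ 1) :
    (∑ f : (Fin n → Bool) → Bool,
      if f ≠ (fun _ => true) ∧
         ∃ σ : Fin k → Bool, ∀ x : Fin n → Bool,
           (∃ i : Fin k, x (Fin.castLE hkn i) ≠ σ i) → f x = true
       then prBias p f else 0) =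
    2 ^ k * (p ^ (2 ^ n - 2 ^ (n - k)) - p ^ 2 ^ n) := by
  classical
  set R : (Fin k → Bool) → ((Fin n → Bool) → Bool) → Prop :=
    fun σ f => ∀ x : Fin n → Bool, (∃ i : Fin k, x (Fin.castLE hkn i) ≠ σ i) → f x = true
    with hR
  -- step 1: pointwise, the indicator splits as a sum over σ
  have step1 : ∀ f : (Fin n → Bool) → Bool,
      (if f ≠ (fun _ => true) ∧ ∃ σ : Fin k → Bool, R σ f then prBias p f else 0)
        = ∑ σ : Fin k → Bool, (if f ≠ (fun _ => true) ∧ R σ f then prBias p f else 0) := by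
    intro f
    by_cases hf : f = fun _ => true
    · simp [hf]
    · by_cases hex : ∃ σ : Fin k → Bool, R σ f
      · obtain ⟨σ₀, hσ₀⟩ := hex
        rw [if_pos ⟨hf, σ₀, hσ₀⟩]
        rw [Finset.sum_eq_single σ₀]
        · rw [if_pos ⟨hf, hσ₀⟩]
        · intro τ _ hτ
          rw [if_neg]
          rintro ⟨-, hRτ⟩
          exact hτ (unique_sigma n k hkn f hf τ σ₀ hRτ hσ₀)
        · intro h; exact absurd (Finset.mem_univ σ₀) h
      · rw [if_neg (fun h => hex h.2)]
        rw [Finset.sum_eq_zero]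
        intro σ _
        rw [if_neg (fun h => hex ⟨σ, h.2⟩)]
  rw [Finset.sum_congr rfl (fun f _ => step1 f)]
  rw [Finset.sum_comm]
  -- step 2: for each σ, compute the inner sum
  have step2 : ∀ σ : Fin k → Bool,
      (∑ f : (Fin n → Bool) → Bool, if f ≠ (fun _ => true) ∧ R σ f then prBias p f else 0)
        = p ^ (2 ^ n - 2 ^ (n - k)) - p ^ 2 ^ n := by
    intro σ
    have point : ∀ f : (Fin n → Bool) → Bool,
        (if f ≠ (fun _ => true) ∧ R σ f then prBias p f else 0)
          = (if R σ f then prBias p f else 0)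
            - (if f = (fun _ => true) then prBias p f else 0) := by
      intro f
      by_cases hf : f = fun _ => true
      · have hRf : R σ f := by intro x _; rw [hf]
        simp [hf, hRf, hR]
      · simp [hf]
    simp only [point]
    rw [Finset.sum_sub_distrib]
    rw [sum_R n k hkn p σ]
    congr 1
    rw [Finset.sum_ite_eq' Finset.univ (fun _ => true) (prBias p)]
    rw [if_pos (Finset.mem_univ _), prBias_const_true]
  rw [Finset.sum_congr rfl (fun σ _ => step2 σ)]
  rw [Finset.sum_const, Finset.card_univ]
  simp [nsmul_eq_mul]
end

section
/- Define S_k = C(n,k) · 2^{k+1} · 2^{2^{n−k}} for 1 ≤ k ≤ n. Then for all 1 ≤ k < n, S_k > S_{k+1}. -/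
theorem S_strictly_decreasing (n : ℕ) (hn : 2 ≤ n) (k : ℕ) (hk1 : 1 ≤ k) (hkn : k < n) :
    n.choose (k + 1) * 2 ^ (k + 2) * 2 ^ 2 ^ (n - (k + 1)) <
      n.choose k * 2 ^ (k + 1) * 2 ^ 2 ^ (n - k) := by
  set j := n - k with hj
  have hj1 : 1 ≤ j := by omega
  have hjk : n - (k + 1) = j - 1 := by omega
  have hchoose : n.choose (k + 1) * (k + 1) = n.choose k * j := by
    rw [hj]; exact Nat.choose_succ_right_eq n k
  have hc2 : 2 * n.choose (k + 1) ≤ n.choose k * j := by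
    calc 2 * n.choose (k + 1) ≤ (k + 1) * n.choose (k + 1) :=
          Nat.mul_le_mul_right _ (by omega)
      _ = n.choose k * j := by rw [Nat.mul_comm]; exact hchoose
  have hB : j < 2 ^ 2 ^ (j - 1) := by
    have h1 : j - 1 < 2 ^ (j - 1) := Nat.lt_two_pow_self
    have h2 : 2 ^ (j - 1) < 2 ^ 2 ^ (j - 1) := Nat.lt_two_pow_self
    omega
  have hC0 : 0 < n.choose k := Nat.choose_pos (le_of_lt hkn)
  have hsplit : 2 ^ 2 ^ j = 2 ^ 2 ^ (j - 1) * 2 ^ 2 ^ (j - 1) := by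
    rw [← pow_add]
    congr 1
    have h : 2 ^ (j - 1) * 2 = 2 ^ j := by
      rw [← pow_succ]; congr 1; omega
    omega
  have hP : 2 ^ (k + 2) = 2 * 2 ^ (k + 1) := by ring
  rw [hjk, hsplit, hP]
  set C1 := n.choose (k + 1)
  set C0 := n.choose k
  set P := 2 ^ (k + 1)
  set B := 2 ^ 2 ^ (j - 1)
  have hPpos : 0 < P := Nat.pow_pos (by norm_num)
  have hBpos : 0 < B := Nat.pow_pos (by norm_num)
  calc C1 * (2 * P) * B = (2 * C1) * (P * B) := by ring
    _ ≤ (C0 * j) * (P * B) := Nat.mul_le_mul_right _ hc2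
    _ < (C0 * B) * (P * B) := by
        have : C0 * j < C0 * B := (Nat.mul_lt_mul_left hC0).mpr hB
        exact (Nat.mul_lt_mul_right (Nat.mul_pos hPpos hBpos)).mpr this
    _ = C0 * P * (B * B) := by ring
end

section
/- The number of canalizing Boolean functions of n variables is asymptotic to 4n · 2^{2^{n−1}} as n → ∞; i.e., the ratio |C_n| / (4n·2^{2^{n−1}}) tends to 1. In particular, |C_n| ≤ 4n·2^{2^{n−1}} for all n ≥ 2. -/
open Filter Finset

namespace Canal

variable {n : ℕ}

def A (n : ℕ) (i : Fin n) (s v : Bool) : Finset ((Fin n → Bool) → Bool) :=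
  univ.filter (fun f => ∀ x, x i = s → f x = v)

def Atr (n : ℕ) (t : Fin n × Bool × Bool) : Finset ((Fin n → Bool) → Bool) :=
  A n t.1 t.2.1 t.2.2

def AEquiv (i : Fin n) (s v : Bool) :
    {f : (Fin n → Bool) → Bool // ∀ x, x i = s → f x = v} ≃
      ({x : Fin n → Bool // x i ≠ s} → Bool) where
  toFun f x := f.1 x.1
  invFun g := ⟨fun x => if h : x i = s then v else g ⟨x, h⟩, fun x hx => dif_pos hx⟩
  left_inv f := by
    apply Subtype.ext; funext x; dsimp
    split
    · next h => exact (f.2 x h).symm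
    · rfl
  right_inv g := by funext x; dsimp; rw [dif_neg x.2]

lemma card_half (i : Fin n) (s : Bool) :
    Fintype.card {x : Fin n → Bool // x i ≠ s} = 2 ^ (n - 1) := by
  have h1 : Fintype.card {x : Fin n → Bool // x i = s} = 2 ^ (n - 1) := by
    have e : {x : Fin n → Bool // x i = s} ≃ ({j : Fin n // j ≠ i} → Bool) := by
      refine ⟨fun x j => x.1 j.1, fun g => ⟨fun j => if h : j = i then s else g ⟨j, h⟩, by simp⟩,
        ?_, ?_⟩
      · intro x; apply Subtype.ext; funext j; dsimp
        split
        · next h => subst h; exact x.2.symm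
        · rfl
      · intro g; funext j; dsimp; rw [dif_neg j.2]
    rw [Fintype.card_congr e, Fintype.card_fun]
    have : Fintype.card {j : Fin n // j ≠ i} = n - 1 := by
      rw [Fintype.card_subtype_compl, Fintype.card_subtype_eq, Fintype.card_fin]
    rw [this, Fintype.card_bool]
  have h2 := Fintype.card_subtype_compl (fun x : Fin n → Bool => x i = s)
  rw [h1] at h2
  rw [h2, Fintype.card_fun, Fintype.card_bool, Fintype.card_fin]
  have hn : 1 ≤ n := i.pos
  have : 2 ^ (n - 1) + 2 ^ (n - 1) = 2 ^ n := by
    rw [← two_mul, ← pow_succ', Nat.sub_add_cancel hn]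
  rw [← this, Nat.add_sub_cancel]

lemma card_A (i : Fin n) (s v : Bool) : (A n i s v).card = 2 ^ 2 ^ (n - 1) := by
  classical
  rw [← Fintype.card_coe]
  have e1 : {f // f ∈ A n i s v} ≃ {f : (Fin n → Bool) → Bool // ∀ x, x i = s → f x = v} :=
    Equiv.subtypeEquivRight (by intro f; simp [A])
  rw [Fintype.card_congr (e1.trans (AEquiv i s v)), Fintype.card_fun, Fintype.card_bool,
    card_half]


lemma bool_ne (b s : Bool) (h : b ≠ s) : b = !s := by
  cases b <;> cases s <;> simp_all

lemma card_quarter_le (i j : Fin n) (hij : i ≠ j) (s s' : Bool) :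
    Fintype.card {x : Fin n → Bool // x i ≠ s ∧ x j ≠ s'} ≤ 2 ^ (n - 2) := by
  classical
  have hres : Function.Injective
      (fun (x : {x : Fin n → Bool // x i ≠ s ∧ x j ≠ s'})
        (k : {k : Fin n // k ≠ i ∧ k ≠ j}) => x.1 k.1) := by
    intro x y h
    apply Subtype.ext; funext k
    by_cases hk : k = i
    · subst hk; rw [bool_ne _ _ x.2.1, bool_ne _ _ y.2.1]
    · by_cases hk' : k = j
      · subst hk'; rw [bool_ne _ _ x.2.2, bool_ne _ _ y.2.2]
      · exact congrFun h ⟨k, hk, hk'⟩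
  have hcard := Fintype.card_le_of_injective _ hres
  refine hcard.trans ?_
  rw [Fintype.card_fun, Fintype.card_bool]
  apply Nat.pow_le_pow_right (by norm_num)
  have e : {k : Fin n // k ≠ i ∧ k ≠ j} ≃ {k : Fin n // ¬ (k = i ∨ k = j)} :=
    Equiv.subtypeEquivRight (by intro k; tauto)
  rw [Fintype.card_congr e, Fintype.card_subtype_compl, Fintype.card_fin]
  have h2 : Fintype.card {k : Fin n // k = i ∨ k = j} = 2 := by
    rw [Fintype.card_subtype]
    have : (univ.filter (fun k : Fin n => k = i ∨ k = j)) = {i, j} := by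
      ext k; simp
    rw [this, card_insert_of_notMem (by simpa using hij), card_singleton]
  rw [h2]

lemma card_inter_le (t t' : Fin n × Bool × Bool) (h : t ≠ t') :
    (Atr n t ∩ Atr n t').card ≤ 2 ^ 2 ^ (n - 2) := by
  classical
  obtain ⟨i, s, v⟩ := t
  obtain ⟨j, s', v'⟩ := t'
  by_cases hij : i = j
  · subst hij
    by_cases hss : s = s'
    · subst hss
      have hvv : v ≠ v' := by simpa [Prod.ext_iff] using h
      have : Atr n (i, s, v) ∩ Atr n (i, s, v') = ∅ := by
        rw [eq_empty_iff_forall_notMem]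
        intro f hf
        simp only [Atr, A, mem_inter, mem_filter, mem_univ, true_and] at hf
        exact hvv ((hf.1 (fun _ => s) rfl).symm.trans (hf.2 (fun _ => s) rfl))
      rw [this]; simp
    · -- same i, different s : at most one function
      have : (Atr n (i, s, v) ∩ Atr n (i, s', v')).card ≤ 1 := by
        rw [card_le_one]
        intro f hf g hg
        simp only [Atr, A, mem_inter, mem_filter, mem_univ, true_and] at hf hg
        funext x
        by_cases hx : x i = s
        · rw [hf.1 x hx, hg.1 x hx]
        · have hx' : x i = s' := by
            rw [bool_ne _ _ hx, bool_ne _ _ (Ne.symm hss)]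
          rw [hf.2 x hx', hg.2 x hx']
      exact this.trans (Nat.one_le_two_pow)
  · -- different coordinates
    rw [← Fintype.card_coe]
    have hinj : Function.Injective
        (fun (f : {f // f ∈ Atr n (i, s, v) ∩ Atr n (j, s', v')})
          (x : {x : Fin n → Bool // x i ≠ s ∧ x j ≠ s'}) => f.1 x.1) := by
      intro f g hfg
      have hf := f.2; have hg := g.2
      simp only [Atr, A, mem_inter, mem_filter, mem_univ, true_and] at hf hg
      apply Subtype.ext; funext x
      by_cases hx : x i = s
      · rw [hf.1 x hx, hg.1 x hx]
      · by_cases hx' : x j = s'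
        · rw [hf.2 x hx', hg.2 x hx']
        · exact congrFun hfg ⟨x, hx, hx'⟩
    have := Fintype.card_le_of_injective _ hinj
    refine this.trans ?_
    rw [Fintype.card_fun, Fintype.card_bool]
    exact Nat.pow_le_pow_right (by norm_num) (card_quarter_le i j hij s s')

lemma union_lower {α ι : Type*} [Fintype α] [DecidableEq α] [Fintype ι] [DecidableEq ι]
    (B : ι → Finset α) :
    ∑ i, (B i).card ≤ (univ.biUnion B).card + ∑ p ∈ univ.offDiag, (B p.1 ∩ B p.2).card := by
  have key : ∀ k : ℕ, k ≤ (if 0 < k then 1 else 0) + (k * k - k) := by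
    intro k
    rcases k with _ | m
    · simp
    · simp only [Nat.succ_sub_one, if_pos (Nat.succ_pos m)]
      have : (m + 1) * (m + 1) - (m + 1) = (m + 1) * m := by
        rw [Nat.mul_succ, Nat.add_sub_cancel]
      rw [this]
      have : m ≤ (m + 1) * m := Nat.le_mul_of_pos_left m (Nat.succ_pos m)
      omega
  have h1 : ∑ i, (B i).card = ∑ a : α, (univ.filter (fun i => a ∈ B i)).card := by
    simp only [card_filter]
    rw [Finset.sum_comm]
    congr 1; funext i
    rw [← card_filter]
    congr 1
    ext a; simp
  have h2 : ∑ p ∈ univ.offDiag, (B p.1 ∩ B p.2).card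
      = ∑ a : α, ((univ.filter (fun i => a ∈ B i)).card * (univ.filter (fun i => a ∈ B i)).card
          - (univ.filter (fun i => a ∈ B i)).card) := by
    have : ∀ p : ι × ι, (B p.1 ∩ B p.2).card = ∑ a : α, if a ∈ B p.1 ∧ a ∈ B p.2 then 1 else 0 := by
      intro p
      rw [← card_filter]
      congr 1; ext a; simp
    simp only [this]
    rw [Finset.sum_comm]
    congr 1; funext a
    rw [← card_filter, ← Finset.offDiag_card]
    congr 1
    ext p
    simp only [Finset.mem_offDiag, Finset.mem_filter, Finset.mem_univ, true_and]
    tauto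
  have h3 : (univ.biUnion B).card
      = ∑ a : α, (if 0 < (univ.filter (fun i => a ∈ B i)).card then 1 else 0) := by
    rw [← card_filter]
    congr 1
    ext a
    simp [Finset.card_pos, Finset.filter_nonempty_iff]
  rw [h1, h2, h3, ← Finset.sum_add_distrib]
  exact Finset.sum_le_sum (fun a _ => key _)


noncomputable def cn (n : ℕ) : Finset ((Fin n → Bool) → Bool) := by
  classical
  exact univ.filter (fun f => ∃ (i : Fin n) (s v : Bool), ∀ x : Fin n → Bool, x i = s → f x = v)

lemma cn_eq : cn n = univ.biUnion (Atr n) := by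
  classical
  ext f
  simp only [cn, Atr, A, mem_biUnion, mem_filter, mem_univ, true_and]
  constructor
  · rintro ⟨i, s, v, h⟩; exact ⟨(i, s, v), h⟩
  · rintro ⟨⟨i, s, v⟩, h⟩; exact ⟨i, s, v, h⟩

lemma card_triples : Fintype.card (Fin n × Bool × Bool) = 4 * n := by
  simp [Fintype.card_prod]; ring

lemma cn_upper : (cn n).card ≤ 4 * n * 2 ^ 2 ^ (n - 1) := by
  classical
  rw [cn_eq]
  refine (Finset.card_biUnion_le).trans ?_
  have : ∀ t : Fin n × Bool × Bool, (Atr n t).card = 2 ^ 2 ^ (n - 1) := by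
    rintro ⟨i, s, v⟩; exact card_A i s v
  simp only [this, Finset.sum_const, smul_eq_mul, Finset.card_univ, card_triples]
  exact le_rfl

lemma cn_lower : 4 * n * 2 ^ 2 ^ (n - 1) ≤ (cn n).card + 16 * n ^ 2 * 2 ^ 2 ^ (n - 2) := by
  classical
  have h1 : ∑ t : Fin n × Bool × Bool, (Atr n t).card = 4 * n * 2 ^ 2 ^ (n - 1) := by
    have : ∀ t : Fin n × Bool × Bool, (Atr n t).card = 2 ^ 2 ^ (n - 1) := by
      rintro ⟨i, s, v⟩; exact card_A i s v
    simp only [this, Finset.sum_const, smul_eq_mul, Finset.card_univ, card_triples]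
  have h2 := union_lower (Atr n)
  rw [h1, ← cn_eq] at h2
  have h3 : ∑ p ∈ (univ : Finset (Fin n × Bool × Bool)).offDiag, (Atr n p.1 ∩ Atr n p.2).card
      ≤ 16 * n ^ 2 * 2 ^ 2 ^ (n - 2) := by
    have hb : ∀ p ∈ (univ : Finset (Fin n × Bool × Bool)).offDiag,
        (Atr n p.1 ∩ Atr n p.2).card ≤ 2 ^ 2 ^ (n - 2) := by
      rintro ⟨t, t'⟩ hp
      rw [Finset.mem_offDiag] at hp
      exact card_inter_le t t' hp.2.2
    refine (Finset.sum_le_sum hb).trans ?_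
    rw [Finset.sum_const, smul_eq_mul]
    apply Nat.mul_le_mul_right
    rw [Finset.offDiag_card, Finset.card_univ, card_triples]
    have : 4 * n * (4 * n) = 16 * n ^ 2 := by ring
    omega
  omega


lemma natcard_eq (n : ℕ) :
    Nat.card {f : (Fin n → Bool) → Bool //
        ∃ (i : Fin n) (s v : Bool), ∀ x : Fin n → Bool, x i = s → f x = v} = (cn n).card := by
  classical
  rw [Nat.card_eq_fintype_card, Fintype.card_subtype]
  congr 1

lemma two_mul_le : ∀ n : ℕ, 6 ≤ n → 2 * n ≤ 2 ^ (n - 2) := by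
  refine Nat.le_induction (by norm_num) ?_
  intro n hn ih
  have h2 : (2:ℕ) ≤ 2 ^ (n - 2) := Nat.one_lt_two_pow (by omega)
  have : n + 1 - 2 = (n - 2) + 1 := by omega
  rw [this, pow_succ]
  omega

lemma hsplit (hn : 2 ≤ n) : (2:ℕ) ^ 2 ^ (n - 1) = 2 ^ 2 ^ (n - 2) * 2 ^ 2 ^ (n - 2) := by
  rw [← pow_add]
  congr 1
  have h : n - 1 = (n - 2) + 1 := by omega
  rw [h, pow_succ]
  ring

lemma key_nat (hn : 6 ≤ n) :
    16 * n ^ 2 * 2 ^ 2 ^ (n - 2) * 2 ^ n ≤ 4 * (4 * n * 2 ^ 2 ^ (n - 1)) := by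
  have h1 := two_mul_le n hn
  have hn2 : n ≤ 2 ^ n := (Nat.lt_two_pow_self (n := n)).le
  have key : n * 2 ^ n ≤ 2 ^ 2 ^ (n - 2) := by
    calc n * 2 ^ n ≤ 2 ^ n * 2 ^ n := Nat.mul_le_mul_right _ hn2
      _ = 2 ^ (n + n) := by rw [pow_add]
      _ ≤ 2 ^ 2 ^ (n - 2) := Nat.pow_le_pow_right (by norm_num) (by linarith)
  calc 16 * n ^ 2 * 2 ^ 2 ^ (n - 2) * 2 ^ n
      = 16 * n * ((n * 2 ^ n) * 2 ^ 2 ^ (n - 2)) := by ring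
    _ ≤ 16 * n * (2 ^ 2 ^ (n - 2) * 2 ^ 2 ^ (n - 2)) := by
        gcongr
    _ = 4 * (4 * n * 2 ^ 2 ^ (n - 1)) := by rw [hsplit (by omega)]; ring

end Canal

open Canal
theorem card_canalizing_asymptotic :
    Tendsto (fun n : ℕ =>
        (Nat.card {f : (Fin n → Bool) → Bool //
            ∃ (i : Fin n) (s v : Bool), ∀ x : Fin n → Bool, x i = s → f x = v} : ℝ) /
          (4 * n * 2 ^ 2 ^ (n - 1)))
      atTop (nhds 1) ∧
    ∀ n : ℕ, 2 ≤ n →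
      Nat.card {f : (Fin n → Bool) → Bool //
          ∃ (i : Fin n) (s v : Bool), ∀ x : Fin n → Bool, x i = s → f x = v} ≤
        4 * n * 2 ^ 2 ^ (n - 1) := by
  constructor
  · apply tendsto_of_tendsto_of_tendsto_of_le_of_le'
      (g := fun n : ℕ => 1 - 4 * (1/2 : ℝ) ^ n) (h := fun _ : ℕ => (1:ℝ))
    · have h0 : Tendsto (fun n : ℕ => (1/2 : ℝ) ^ n) atTop (nhds 0) :=
        tendsto_pow_atTop_nhds_zero_of_lt_one (by norm_num) (by norm_num)
      have := (h0.const_mul (4:ℝ)).const_sub 1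
      simpa using this
    · exact tendsto_const_nhds
    · filter_upwards [eventually_ge_atTop 6] with n hn
      rw [natcard_eq n]
      have hn0 : (0:ℝ) < (n:ℝ) := by exact_mod_cast (by omega : 0 < n)
      have hD : (0:ℝ) < 4 * (n:ℝ) * 2 ^ 2 ^ (n - 1) := by
        apply mul_pos (by linarith) (by positivity)
      rw [le_div_iff₀ hD]
      have hlow : (4 * (n:ℝ) * 2 ^ 2 ^ (n - 1)) ≤
          ((cn n).card : ℝ) + 16 * (n:ℝ) ^ 2 * 2 ^ 2 ^ (n - 2) := by
        have := cn_lower (n := n)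
        push_cast at this ⊢
        exact_mod_cast this
      have hkey : 16 * (n:ℝ) ^ 2 * 2 ^ 2 ^ (n - 2) * 2 ^ n ≤
          4 * (4 * (n:ℝ) * 2 ^ 2 ^ (n - 1)) := by
        exact_mod_cast key_nat hn
      have hpow : ((1/2 : ℝ)) ^ n * 2 ^ n = 1 := by
        rw [← mul_pow]; norm_num
      have hB : 16 * (n:ℝ) ^ 2 * 2 ^ 2 ^ (n - 2) ≤
          4 * (1/2 : ℝ) ^ n * (4 * (n:ℝ) * 2 ^ 2 ^ (n - 1)) := by
        have h := mul_le_mul_of_nonneg_left hkey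
          (pow_nonneg (by norm_num : (0:ℝ) ≤ (1/2 : ℝ)) n)
        calc 16 * (n:ℝ) ^ 2 * 2 ^ 2 ^ (n - 2)
            = 16 * (n:ℝ) ^ 2 * 2 ^ 2 ^ (n - 2) * ((1/2 : ℝ) ^ n * 2 ^ n) := by
              rw [hpow, mul_one]
          _ = (1/2 : ℝ) ^ n * (16 * (n:ℝ) ^ 2 * 2 ^ 2 ^ (n - 2) * 2 ^ n) := by ring
          _ ≤ (1/2 : ℝ) ^ n * (4 * (4 * (n:ℝ) * 2 ^ 2 ^ (n - 1))) := h
          _ = 4 * (1/2 : ℝ) ^ n * (4 * (n:ℝ) * 2 ^ 2 ^ (n - 1)) := by ring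
      nlinarith [hB, hlow]
    · filter_upwards [eventually_ge_atTop 6] with n hn
      rw [natcard_eq n]
      have hn0 : (0:ℝ) < (n:ℝ) := by exact_mod_cast (by omega : 0 < n)
      have hD : (0:ℝ) < 4 * (n:ℝ) * 2 ^ 2 ^ (n - 1) := by
        apply mul_pos (by linarith) (by positivity)
      rw [div_le_one hD]
      have := cn_upper (n := n)
      push_cast
      exact_mod_cast this
  · intro n hn
    rw [natcard_eq n]
    exact cn_upper
end

section
/- For n ≥ 2, the number of Boolean functions of n variables that are canalizing for exactly n variables (i.e., every variable is a canalizing variable) equals 2 + 2^{n+1}. -/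
theorem card_canalizing_all_vars (n : ℕ) (hn : 2 ≤ n) :
    Nat.card {f : (Fin n → Bool) → Bool //
      ∀ i : Fin n, ∃ s v : Bool, ∀ x : Fin n → Bool, x i = s → f x = v} =
    2 + 2 ^ (n + 1) := by
  have hn0 : 0 < n := by omega
  have hn1 : 1 < n := by omega
  let i0 : Fin n := ⟨0, hn0⟩
  let i1 : Fin n := ⟨1, hn1⟩
  have hi01 : i0 ≠ i1 := by
    simp [i0, i1, Fin.ext_iff]
  let g : Bool ⊕ (Bool × (Fin n → Bool)) → {f : (Fin n → Bool) → Bool //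
      ∀ i : Fin n, ∃ s v : Bool, ∀ x : Fin n → Bool, x i = s → f x = v} :=
    fun a => match a with
    | .inl b => ⟨fun _ => b, fun _ => ⟨true, b, fun _ _ => rfl⟩⟩
    | .inr (b, p) => ⟨fun x => if x = p then b else !b, fun i =>
        ⟨!(p i), !b, fun x hx => by
          have : x ≠ p := by
            intro h; subst h; simp at hx
          simp [this]⟩⟩
  have hinj : Function.Injective g := by
    rintro (b | ⟨b, p⟩) (b' | ⟨b', p'⟩) h
    · have := congrFun (congrArg Subtype.val h) (fun _ => true)
      simpa using this
    · exfalso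
      have h1 := congrFun (congrArg Subtype.val h) p'
      simp only [g, if_pos rfl] at h1
      -- b = b'
      have q : Fin n → Bool := fun _ => true
      have hq : (Function.update p' i0 (!(p' i0))) ≠ p' := by
        intro he
        have := congrFun he i0
        simp at this
      have h2 := congrFun (congrArg Subtype.val h) (Function.update p' i0 (!(p' i0)))
      simp only [g, if_neg hq] at h2
      rw [h1] at h2
      cases b' <;> simp_all
    · exfalso
      have h1 := congrFun (congrArg Subtype.val h) p
      simp only [g, if_pos rfl] at h1
      have hq : (Function.update p i0 (!(p i0))) ≠ p := by
        intro he
        have := congrFun he i0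
        simp at this
      have h2 := congrFun (congrArg Subtype.val h) (Function.update p i0 (!(p i0)))
      simp only [g, if_neg hq] at h2
      rw [← h1] at h2
      cases b <;> simp_all
    · have hcf := congrArg Subtype.val h
      by_cases hpp : p = p'
      · subst hpp
        have h1 := congrFun hcf p
        simp [g] at h1
        simp [h1]
      · exfalso
        -- find index where they differ, and a third point
        obtain ⟨i, hi⟩ := Function.ne_iff.mp hpp
        -- pick j ≠ i
        have hexj : ∃ j : Fin n, j ≠ i := by
          by_cases h0 : i = i0
          · exact ⟨i1, by rw [h0]; exact fun he => hi01 he.symm⟩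
          · exact ⟨i0, fun he => h0 he.symm⟩
        obtain ⟨j, hj⟩ := hexj
        set q : Fin n → Bool := Function.update p j (!(p j)) with hqdef
        have hq1 : q ≠ p := by
          intro he
          have := congrFun he j
          simp [q] at this
        have hq2 : q ≠ p' := by
          intro he
          have := congrFun he i
          simp [q, Function.update_of_ne (Ne.symm hj)] at this
          exact hi this
        have h1 := congrFun hcf p
        simp [g, hpp] at h1
        have h2 := congrFun hcf q
        simp only [g, if_neg hq1, if_neg hq2] at h2
        rw [h1] at h2
        cases b' <;> simp_all
  have hsurj : Function.Surjective g := by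
    rintro ⟨f, hf⟩
    by_cases hc : ∃ b, ∀ x, f x = b
    · obtain ⟨b, hb⟩ := hc
      exact ⟨.inl b, Subtype.ext (funext fun x => (hb x).symm)⟩
    · push_neg at hc
      have hf' := hf
      choose s v hsv using hf'
      have key : ∀ i, v i = v i0 := by
        intro i
        by_cases h : i = i0
        · rw [h]
        · set x : Fin n → Bool := fun k => if k = i then s i else s i0 with hx
          have h1 : f x = v i := hsv i x (by simp [x])
          have h2 : f x = v i0 := hsv i0 x (by simp [x, Ne.symm h])
          rw [← h1, h2]
      set p : Fin n → Bool := fun i => !(s i) with hp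
      have hnp : ∀ x, x ≠ p → f x = v i0 := by
        intro x hx
        obtain ⟨i, hi⟩ := Function.ne_iff.mp hx
        have hxi : x i = s i := by
          simp only [p] at hi
          cases hxi : x i <;> cases hsi : s i <;> simp_all
        rw [hsv i x hxi, key i]
      have hpv : f p = !(v i0) := by
        by_contra hcon
        have hfp : f p = v i0 := by
          cases hfpv : f p <;> cases hvv : v i0 <;> simp_all
        obtain ⟨x, hxne⟩ := hc (v i0)
        by_cases hxp : x = p
        · rw [hxp, hfp] at hxne; exact hxne rfl
        · exact hxne (hnp x hxp)
      refine ⟨.inr (!(v i0), p), Subtype.ext (funext fun x => ?_)⟩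
      by_cases hxp : x = p
      · simp [g, hxp, hpv]
      · simp [g, hxp, hnp x hxp]
  have hcard := Nat.card_eq_of_bijective g ⟨hinj, hsurj⟩
  rw [← hcard]
  simp [Nat.card_eq_fintype_card]
  ring
end
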